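/- Let K = ∏_{i=1}^n [mᵢ, Mᵢ] ⊆ ℝⁿ be a box and let μ and ν be finite Borel measures on ℝⁿ that vanish outside K (μ(ℝⁿ \ K) = ν(ℝⁿ \ K) = 0). If ∫ σ(c·x + b) dμ(x) = ∫ σ(c·x + b) dν(x) for every c ∈ ℝⁿ and every b ∈ ℝ, then μ = ν. (Equivalently: the sigmoid σ is a discriminatory function, so a finite signed Borel measure on K annihilating all functions x ↦ σ(c·x + b) must be zero.) -/

import Mathlib

open MeasureTheory

/-- The sigmoid function `σ(y) = (1 + exp (−y))⁻¹`. -/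
noncomputable def sigmoid (y : ℝ) : ℝ := (1 + Real.exp (-y))⁻¹

open Set Filter Topology
open scoped ENNReal NNReal

lemma sigmoid_cont : Continuous sigmoid := by
  apply Continuous.inv₀
  · continuity
  · intro x; positivity

lemma sigmoid_nonneg (y : ℝ) : 0 ≤ sigmoid y := by
  unfold sigmoid; positivity

lemma sigmoid_le_one (y : ℝ) : sigmoid y ≤ 1 := by
  unfold sigmoid
  rw [inv_le_one_iff₀]
  right
  nlinarith [Real.exp_pos (-y)]

lemma sigmoid_tendsto_one : Tendsto sigmoid atTop (𝓝 1) := by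
  have h1 : Tendsto (fun y : ℝ => 1 + Real.exp (-y)) atTop (𝓝 (1 + 0)) :=
    tendsto_const_nhds.add ((Real.tendsto_exp_atBot).comp tendsto_neg_atTop_atBot)
  have := h1.inv₀ (by norm_num)
  simp at this; exact this

lemma sigmoid_tendsto_zero : Tendsto sigmoid atBot (𝓝 0) := by
  have h1 : Tendsto (fun y : ℝ => 1 + Real.exp (-y)) atBot atTop := by
    apply tendsto_atTop_add_const_left
    exact Real.tendsto_exp_atTop.comp tendsto_neg_atBot_atTop
  exact h1.inv_tendsto_atTop

lemma sigmoid_lim (y : ℝ) :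
    Tendsto (fun k : ℕ => sigmoid (((k : ℝ) + 1) * y)) atTop
      (𝓝 (if 0 < y then 1 else if y = 0 then 1/2 else 0)) := by
  rcases lt_trichotomy 0 y with hy | hy | hy
  · rw [if_pos hy]
    apply sigmoid_tendsto_one.comp
    exact Tendsto.atTop_mul_const hy
      (tendsto_atTop_add_const_right _ 1 tendsto_natCast_atTop_atTop)
  · subst hy
    simp only [mul_zero, lt_irrefl, if_false, if_true, if_pos rfl]
    have : sigmoid 0 = 1/2 := by norm_num [sigmoid]
    rw [this]
    exact tendsto_const_nhds
  · rw [if_neg (by linarith), if_neg (by linarith)]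
    apply sigmoid_tendsto_zero.comp
    have : Tendsto (fun k : ℕ => ((k:ℝ)+1)) atTop atTop :=
      tendsto_atTop_add_const_right _ 1 tendsto_natCast_atTop_atTop
    exact this.atTop_mul_const_of_neg hy

section Main
variable {n : ℕ}

lemma lin_cont (c : Fin n → ℝ) : Continuous (fun x : Fin n → ℝ => ∑ j, c j * x j) := by
  exact continuous_finset_sum _ fun j _ => (continuous_const.mul (continuous_apply j))

/-- The limit function -/
noncomputable def limFn (c : Fin n → ℝ) (b : ℝ) (x : Fin n → ℝ) : ℝ :=
  if 0 < ∑ j, c j * x j - b then 1 else if (∑ j, c j * x j - b) = 0 then 1/2 else 0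

lemma tendsto_int (μ : Measure (Fin n → ℝ)) [IsFiniteMeasure μ] (c : Fin n → ℝ) (b : ℝ) :
    Tendsto (fun k : ℕ => ∫ x, sigmoid (((k:ℝ)+1) * (∑ j, c j * x j - b)) ∂μ) atTop
      (𝓝 (∫ x, limFn c b x ∂μ)) := by
  apply tendsto_integral_of_dominated_convergence (bound := fun _ => (1:ℝ))
  · intro k
    exact ((sigmoid_cont.comp (continuous_const.mul ((lin_cont c).sub continuous_const))).aestronglyMeasurable)
  · exact integrable_const 1
  · intro k
    filter_upwards with x
    rw [Real.norm_eq_abs, abs_of_nonneg (sigmoid_nonneg _)]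
    exact sigmoid_le_one _
  · filter_upwards with x
    exact sigmoid_lim _

lemma integral_limFn (μ : Measure (Fin n → ℝ)) [IsFiniteMeasure μ] (c : Fin n → ℝ) (b : ℝ) :
    ∫ x, limFn c b x ∂μ =
      (μ {x | b < ∑ j, c j * x j}).toReal + (1/2) * (μ {x | ∑ j, c j * x j = b}).toReal := by
  have hms1 : MeasurableSet {x : Fin n → ℝ | b < ∑ j, c j * x j} :=
    measurableSet_lt measurable_const (lin_cont c).measurable
  have hms2 : MeasurableSet {x : Fin n → ℝ | ∑ j, c j * x j = b} :=
    (lin_cont c).measurable (measurableSet_singleton b)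
  have heq : limFn c b = fun x =>
      Set.indicator {x : Fin n → ℝ | b < ∑ j, c j * x j} (fun _ => (1:ℝ)) x
      + Set.indicator {x : Fin n → ℝ | ∑ j, c j * x j = b} (fun _ => (1/2:ℝ)) x := by
    funext x
    simp only [limFn, Set.indicator_apply, Set.mem_setOf_eq]
    rcases lt_trichotomy b (∑ j, c j * x j) with hx | hx | hx
    · rw [if_pos (by linarith), if_pos hx, if_neg (by linarith)]; ring
    · rw [if_neg (by linarith), if_pos (by linarith), if_neg (by linarith), if_pos hx.symm]; ring
    · rw [if_neg (by linarith), if_neg (by linarith), if_neg (by linarith), if_neg (by linarith)]; ring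
  rw [heq, integral_add ((integrable_const _).indicator hms1) ((integrable_const _).indicator hms2),
    integral_indicator_const _ hms1, integral_indicator_const _ hms2]
  simp [mul_comm]; rfl

lemma map_eq_of_h (μ ν : Measure (Fin n → ℝ)) [IsFiniteMeasure μ] [IsFiniteMeasure ν]
    (h : ∀ (c : Fin n → ℝ) (b : ℝ),
      ∫ x, sigmoid (∑ j : Fin n, c j * x j + b) ∂μ
        = ∫ x, sigmoid (∑ j : Fin n, c j * x j + b) ∂ν)
    (c : Fin n → ℝ) :
    μ.map (fun x => ∑ j, c j * x j) = ν.map (fun x => ∑ j, c j * x j) := by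
  -- total masses agree
  have htot : (μ Set.univ).toReal = (ν Set.univ).toReal := by
    have h0 := h 0 0
    simp only [Pi.zero_apply, zero_mul, Finset.sum_const_zero, add_zero] at h0
    have hs0 : sigmoid 0 = 1/2 := by norm_num [sigmoid]
    rw [integral_const, integral_const, hs0] at h0
    simp at h0; exact h0
  -- the key equality for every offset b
  have key : ∀ b : ℝ,
      (μ {x | b < ∑ j, c j * x j}).toReal + (1/2) * (μ {x | ∑ j, c j * x j = b}).toReal
      = (ν {x | b < ∑ j, c j * x j}).toReal + (1/2) * (ν {x | ∑ j, c j * x j = b}).toReal := by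
    intro b
    rw [← integral_limFn, ← integral_limFn]
    have heq : ∀ k : ℕ,
        ∫ x, sigmoid (((k:ℝ)+1) * (∑ j, c j * x j - b)) ∂μ
          = ∫ x, sigmoid (((k:ℝ)+1) * (∑ j, c j * x j - b)) ∂ν := by
      intro k
      have := h (fun j => ((k:ℝ)+1) * c j) (-(((k:ℝ)+1) * b))
      have harg : ∀ x : Fin n → ℝ,
          (∑ j, (((k:ℝ)+1) * c j) * x j) + (-(((k:ℝ)+1) * b))
            = ((k:ℝ)+1) * (∑ j, c j * x j - b) := by
        intro x
        simp only [mul_sub, Finset.mul_sum, mul_assoc]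
        ring
      simp_rw [harg] at this
      exact this
    have t1 := tendsto_int μ c b
    have t2 := tendsto_int ν c b
    simp_rw [heq] at t1
    exact tendsto_nhds_unique t1 t2
  -- CDFs agree
  have hcdf : ∀ a : ℝ, μ {x | ∑ j, c j * x j ≤ a} = ν {x | ∑ j, c j * x j ≤ a} := by
    intro a
    have hL : ∀ k : ℕ, (0:ℝ) < 1/((k:ℝ)+1) := fun k => by positivity
    set b : ℕ → ℝ := fun k => a + 1/((k:ℝ)+1) with hb
    have hbanti : Antitone b := by
      intro i j hij
      have : (i:ℝ) + 1 ≤ (j:ℝ) + 1 := by exact_mod_cast by omega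
      have := one_div_le_one_div_of_le (by positivity) this
      simp only [hb]; linarith
    have hbtend : Tendsto b atTop (𝓝 a) := by
      have := tendsto_one_div_add_atTop_nhds_zero_nat (𝕜 := ℝ)
      simpa [hb] using tendsto_const_nhds.add this
    have hmsle : ∀ r : ℝ, MeasurableSet {x : Fin n → ℝ | ∑ j, c j * x j ≤ r} :=
      fun r => measurableSet_le (lin_cont c).measurable measurable_const
    have hmseq : ∀ r : ℝ, MeasurableSet {x : Fin n → ℝ | ∑ j, c j * x j = r} :=
      fun r => (lin_cont c).measurable (measurableSet_singleton r)
    -- s k := {ℓ ≤ b k}, decreasing to {ℓ ≤ a}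
    have hsinter : (⋂ k : ℕ, {x : Fin n → ℝ | ∑ j, c j * x j ≤ b k})
        = {x | ∑ j, c j * x j ≤ a} := by
      ext x
      simp only [Set.mem_iInter, Set.mem_setOf_eq]
      constructor
      · intro hx
        exact ge_of_tendsto' hbtend hx
      · intro hx k
        have := (hL k).le
        simp only [hb]; linarith
    have htinter : (⋂ k : ℕ, {x : Fin n → ℝ | a < ∑ j, c j * x j ∧ ∑ j, c j * x j ≤ b k})
        = (∅ : Set (Fin n → ℝ)) := by
      ext x
      simp only [Set.mem_iInter, Set.mem_setOf_eq, Set.mem_empty_iff_false, iff_false]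
      intro hcon
      have h1 : a < ∑ j, c j * x j := (hcon 0).1
      have h2 : ∑ j, c j * x j ≤ a := ge_of_tendsto' hbtend (fun k => (hcon k).2)
      linarith
    -- complement formula
    have compl : ∀ (ρ : Measure (Fin n → ℝ)), IsFiniteMeasure ρ → ∀ r : ℝ,
        (ρ {x | r < ∑ j, c j * x j}).toReal
          = (ρ Set.univ).toReal - (ρ {x | ∑ j, c j * x j ≤ r}).toReal := by
      intro ρ hρ r
      have hdisj : {x : Fin n → ℝ | ∑ j, c j * x j ≤ r} = {x | r < ∑ j, c j * x j}ᶜ := by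
        ext x; simp [not_lt]
      have hadd := measure_add_measure_compl (μ := ρ)
        (s := {x : Fin n → ℝ | r < ∑ j, c j * x j})
        (measurableSet_lt measurable_const (lin_cont c).measurable)
      rw [← hdisj] at hadd
      have h1 : (ρ {x | r < ∑ j, c j * x j}).toReal + (ρ {x | ∑ j, c j * x j ≤ r}).toReal
          = (ρ Set.univ).toReal := by
        rw [← ENNReal.toReal_add (measure_ne_top _ _) (measure_ne_top _ _), hadd]
      linarith
    -- convergence of  μ (s k)
    have hμs : Tendsto (fun k : ℕ => (μ {x | ∑ j, c j * x j ≤ b k}).toReal) atTop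
        (𝓝 ((μ {x | ∑ j, c j * x j ≤ a}).toReal)) := by
      have h1 := tendsto_measure_iInter_atTop (μ := μ)
        (fun k => (hmsle (b k)).nullMeasurableSet)
        (fun i j hij x hx => le_trans hx (hbanti hij)) ⟨0, measure_ne_top μ _⟩
      rw [hsinter] at h1
      exact (ENNReal.tendsto_toReal (measure_ne_top μ _)).comp h1
    have hνs : Tendsto (fun k : ℕ => (ν {x | ∑ j, c j * x j ≤ b k}).toReal) atTop
        (𝓝 ((ν {x | ∑ j, c j * x j ≤ a}).toReal)) := by
      have h1 := tendsto_measure_iInter_atTop (μ := ν)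
        (fun k => (hmsle (b k)).nullMeasurableSet)
        (fun i j hij x hx => le_trans hx (hbanti hij)) ⟨0, measure_ne_top ν _⟩
      rw [hsinter] at h1
      exact (ENNReal.tendsto_toReal (measure_ne_top ν _)).comp h1
    -- the atoms term goes to zero
    have hzero : ∀ (ρ : Measure (Fin n → ℝ)), IsFiniteMeasure ρ →
        Tendsto (fun k : ℕ => (ρ {x | ∑ j, c j * x j = b k}).toReal) atTop (𝓝 0) := by
      intro ρ hρ
      have hmst : ∀ k : ℕ, MeasurableSet
          {x : Fin n → ℝ | a < ∑ j, c j * x j ∧ ∑ j, c j * x j ≤ b k} :=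
        fun k => (measurableSet_lt measurable_const (lin_cont c).measurable).inter (hmsle (b k))
      have h1 := tendsto_measure_iInter_atTop (μ := ρ)
        (fun k => (hmst k).nullMeasurableSet)
        (fun i j hij x hx => ⟨hx.1, le_trans hx.2 (hbanti hij)⟩) ⟨0, measure_ne_top ρ _⟩
      rw [htinter] at h1
      simp only [measure_empty] at h1
      have h2 : Tendsto (fun k : ℕ =>
          (ρ {x : Fin n → ℝ | a < ∑ j, c j * x j ∧ ∑ j, c j * x j ≤ b k}).toReal) atTop (𝓝 0) := by
        have := (ENNReal.tendsto_toReal (by simp)).comp h1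
        simp at this; exact this
      apply squeeze_zero (fun k => ENNReal.toReal_nonneg) (fun k => ?_) h2
      apply ENNReal.toReal_mono (measure_ne_top ρ _)
      apply measure_mono
      intro x hx
      simp only [Set.mem_setOf_eq] at hx ⊢
      constructor
      · rw [hx]; simp only [hb]; linarith [hL k]
      · rw [hx]
    -- combine
    have hkey' : ∀ k : ℕ,
        (μ {x | ∑ j, c j * x j ≤ b k}).toReal - (1/2) * (μ {x | ∑ j, c j * x j = b k}).toReal
        = (ν {x | ∑ j, c j * x j ≤ b k}).toReal - (1/2) * (ν {x | ∑ j, c j * x j = b k}).toReal := by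
      intro k
      have hk := key (b k)
      rw [compl μ ‹_› (b k), compl ν ‹_› (b k)] at hk
      linarith
    have hμlim : Tendsto (fun k : ℕ =>
        (μ {x | ∑ j, c j * x j ≤ b k}).toReal - (1/2) * (μ {x | ∑ j, c j * x j = b k}).toReal)
        atTop (𝓝 ((μ {x | ∑ j, c j * x j ≤ a}).toReal)) := by
      have := hμs.sub ((hzero μ ‹_›).const_mul (1/2))
      simpa using this
    have hνlim : Tendsto (fun k : ℕ =>
        (ν {x | ∑ j, c j * x j ≤ b k}).toReal - (1/2) * (ν {x | ∑ j, c j * x j = b k}).toReal)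
        atTop (𝓝 ((ν {x | ∑ j, c j * x j ≤ a}).toReal)) := by
      have := hνs.sub ((hzero ν ‹_›).const_mul (1/2))
      simpa using this
    simp_rw [hkey'] at hμlim
    have := tendsto_nhds_unique hμlim hνlim
    exact (ENNReal.toReal_eq_toReal_iff' (measure_ne_top μ _) (measure_ne_top ν _)).mp this
  -- conclude
  have hmeas : Measurable (fun x : Fin n → ℝ => ∑ j, c j * x j) := (lin_cont c).measurable
  have : IsFiniteMeasure (μ.map (fun x => ∑ j, c j * x j)) := Measure.isFiniteMeasure_map μ _
  refine Measure.ext_of_Iic _ _ (fun a => ?_)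
  rw [Measure.map_apply hmeas measurableSet_Iic, Measure.map_apply hmeas measurableSet_Iic]
  exact hcdf a

/-- exponential of a linear functional -/
noncomputable def expF (c : Fin n → ℝ) : (Fin n → ℝ) → ℝ := fun x => Real.exp (∑ j, c j * x j)

lemma expF_cont (c : Fin n → ℝ) : Continuous (expF c) :=
  Real.continuous_exp.comp (lin_cont c)

lemma expF_mul (c c' : Fin n → ℝ) : expF c * expF c' = expF (c + c') := by
  funext x
  simp only [expF, Pi.mul_apply, ← Real.exp_add, Pi.add_apply, add_mul, Finset.sum_add_distrib]

lemma span_mul_mem {g₁ g₂ : (Fin n → ℝ) → ℝ}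
    (h₁ : g₁ ∈ Submodule.span ℝ (Set.range (expF (n := n))))
    (h₂ : g₂ ∈ Submodule.span ℝ (Set.range (expF (n := n)))) :
    g₁ * g₂ ∈ Submodule.span ℝ (Set.range (expF (n := n))) := by
  induction h₁, h₂ using Submodule.span_induction₂ with
  | mem_mem x y hx hy =>
    obtain ⟨c, rfl⟩ := hx
    obtain ⟨c', rfl⟩ := hy
    rw [expF_mul]
    exact Submodule.subset_span ⟨c + c', rfl⟩
  | zero_left y hy => rw [zero_mul]; exact zero_mem _
  | zero_right x hx => rw [mul_zero]; exact zero_mem _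
  | add_left x y z hx hy hz h1 h2 => rw [add_mul]; exact add_mem h1 h2
  | add_right x y z hx hy hz h1 h2 => rw [mul_add]; exact add_mem h1 h2
  | smul_left r x y hx hy h1 => rw [smul_mul_assoc]; exact Submodule.smul_mem _ _ h1
  | smul_right r x y hx hy h1 => rw [mul_smul_comm]; exact Submodule.smul_mem _ _ h1

lemma integrable_of_cont {m M : Fin n → ℝ} (μ : Measure (Fin n → ℝ)) [IsFiniteMeasure μ]
    (hμ : μ (Set.univ.pi (fun i => Set.Icc (m i) (M i)))ᶜ = 0)
    {g : (Fin n → ℝ) → ℝ} (hg : Continuous g) : Integrable g μ := by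
  have hK : IsCompact (Set.univ.pi (fun i => Set.Icc (m i) (M i))) :=
    isCompact_univ_pi fun i => isCompact_Icc
  obtain ⟨C, hC⟩ := hK.exists_bound_of_continuousOn hg.continuousOn
  have haeK : ∀ᵐ x ∂μ, x ∈ Set.univ.pi (fun i => Set.Icc (m i) (M i)) := by
    rw [ae_iff]
    convert hμ using 2
    rfl
  refine Integrable.mono' (integrable_const C) hg.aestronglyMeasurable ?_
  filter_upwards [haeK] with x hx
  exact hC x hx

lemma exp_int_eq (μ ν : Measure (Fin n → ℝ)) [IsFiniteMeasure μ] [IsFiniteMeasure ν]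
    (h : ∀ (c : Fin n → ℝ) (b : ℝ),
      ∫ x, sigmoid (∑ j : Fin n, c j * x j + b) ∂μ
        = ∫ x, sigmoid (∑ j : Fin n, c j * x j + b) ∂ν)
    (c : Fin n → ℝ) : ∫ x, expF c x ∂μ = ∫ x, expF c x ∂ν := by
  have hmeas : Measurable (fun x : Fin n → ℝ => ∑ j, c j * x j) := (lin_cont c).measurable
  have hmap := map_eq_of_h μ ν h c
  have h1 : ∫ x, expF c x ∂μ = ∫ t, Real.exp t ∂(μ.map (fun x => ∑ j, c j * x j)) :=
    (integral_map hmeas.aemeasurable Real.continuous_exp.aestronglyMeasurable).symm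
  have h2 : ∫ x, expF c x ∂ν = ∫ t, Real.exp t ∂(ν.map (fun x => ∑ j, c j * x j)) :=
    (integral_map hmeas.aemeasurable Real.continuous_exp.aestronglyMeasurable).symm
  rw [h1, h2, hmap]

lemma span_P {m M : Fin n → ℝ} (μ ν : Measure (Fin n → ℝ)) [IsFiniteMeasure μ] [IsFiniteMeasure ν]
    (hμ : μ (Set.univ.pi (fun i => Set.Icc (m i) (M i)))ᶜ = 0)
    (hν : ν (Set.univ.pi (fun i => Set.Icc (m i) (M i)))ᶜ = 0)
    (h : ∀ (c : Fin n → ℝ) (b : ℝ),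
      ∫ x, sigmoid (∑ j : Fin n, c j * x j + b) ∂μ
        = ∫ x, sigmoid (∑ j : Fin n, c j * x j + b) ∂ν)
    {g : (Fin n → ℝ) → ℝ} (hg : g ∈ Submodule.span ℝ (Set.range (expF (n := n)))) :
    Integrable g μ ∧ Integrable g ν ∧ ∫ x, g x ∂μ = ∫ x, g x ∂ν := by
  induction hg using Submodule.span_induction with
  | mem g hgr =>
    obtain ⟨c, rfl⟩ := hgr
    exact ⟨integrable_of_cont μ hμ (expF_cont c), integrable_of_cont ν hν (expF_cont c),
      exp_int_eq μ ν h c⟩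
  | zero => simpa using ⟨integrable_zero _ _ _, integrable_zero _ _ _⟩
  | add x y hx hy ihx ihy =>
    refine ⟨ihx.1.add ihy.1, ihx.2.1.add ihy.2.1, ?_⟩
    rw [Pi.add_def] at *
    rw [integral_add ihx.1 ihy.1, integral_add ihx.2.1 ihy.2.1, ihx.2.2, ihy.2.2]
  | smul r x hx ihx =>
    refine ⟨ihx.1.smul r, ihx.2.1.smul r, ?_⟩
    have : ∀ (ρ : Measure (Fin n → ℝ)), ∫ z, (r • x) z ∂ρ = r • ∫ z, x z ∂ρ := by
      intro ρ; simp only [Pi.smul_apply]; exact integral_smul r x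
    rw [this, this, ihx.2.2]

end Main

/-- The sigmoid is a discriminatory function: two finite Borel measures supported on a box
`K = ∏ᵢ [mᵢ, Mᵢ] ⊆ ℝⁿ` that integrate all functions `x ↦ σ(c·x + b)` identically must be
equal.  (Equivalently, a finite signed Borel measure on `K` annihilating all such
functions is zero.) -/
theorem sigmoid_discriminatory
    (n : ℕ) (m M : Fin n → ℝ) (hmM : ∀ i, m i ≤ M i)
    (μ ν : Measure (Fin n → ℝ)) [IsFiniteMeasure μ] [IsFiniteMeasure ν]
    (hμ : μ (Set.univ.pi (fun i => Set.Icc (m i) (M i)))ᶜ = 0)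
    (hν : ν (Set.univ.pi (fun i => Set.Icc (m i) (M i)))ᶜ = 0)
    (h : ∀ (c : Fin n → ℝ) (b : ℝ),
      ∫ x, sigmoid (∑ j : Fin n, c j * x j + b) ∂μ
        = ∫ x, sigmoid (∑ j : Fin n, c j * x j + b) ∂ν) :
    μ = ν := by
  classical
  set K := Set.univ.pi (fun i => Set.Icc (m i) (M i)) with hKdef
  have hK : IsCompact K := isCompact_univ_pi fun i => isCompact_Icc
  haveI : CompactSpace K := isCompact_iff_compactSpace.mp hK
  -- the subalgebra of restrictions of exponential sums
  let W : Subalgebra ℝ C(K, ℝ) :=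
    { carrier := {p | ∃ g : (Fin n → ℝ) → ℝ,
        g ∈ Submodule.span ℝ (Set.range (expF (n := n))) ∧ ∀ x : K, p x = g x},
      mul_mem' := fun {p q} hp hq => by
        obtain ⟨g, hg, hpg⟩ := hp; obtain ⟨g', hg', hqg⟩ := hq
        exact ⟨g * g', span_mul_mem hg hg', fun x => by
          simp [ContinuousMap.mul_apply, hpg x, hqg x]⟩
      one_mem' := ⟨expF 0, Submodule.subset_span ⟨0, rfl⟩, fun x => by simp [expF]⟩
      add_mem' := fun {p q} hp hq => by
        obtain ⟨g, hg, hpg⟩ := hp; obtain ⟨g', hg', hqg⟩ := hq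
        exact ⟨g + g', add_mem hg hg', fun x => by simp [hpg x, hqg x]⟩
      zero_mem' := ⟨0, zero_mem _, fun x => by simp⟩
      algebraMap_mem' := fun r =>
        ⟨r • expF 0, Submodule.smul_mem _ _ (Submodule.subset_span ⟨0, rfl⟩), fun x => by
          simp [expF]⟩ }
  have hsep : W.SeparatesPoints := by
    intro x y hxy
    have hexj : ∃ j, (x : Fin n → ℝ) j ≠ (y : Fin n → ℝ) j := by
      by_contra hcon; push_neg at hcon
      exact hxy (Subtype.ext (funext hcon))
    obtain ⟨j, hj⟩ := hexj
    have hval : ∀ z : Fin n → ℝ, expF (Pi.single j 1) z = Real.exp (z j) := by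
      intro z
      simp [expF, Pi.single_apply, ite_mul]
    refine ⟨_, ⟨ContinuousMap.mk (fun z : K => expF (Pi.single j 1) (z : Fin n → ℝ))
      ((expF_cont _).comp continuous_subtype_val),
      ⟨expF (Pi.single j 1), Submodule.subset_span ⟨_, rfl⟩, fun _ => rfl⟩, rfl⟩, ?_⟩
    simp only [ContinuousMap.coe_mk, hval]
    exact fun he => hj (Real.exp_injective he)
  have haeμ : ∀ᵐ x ∂μ, x ∈ K := by rw [ae_iff]; convert hμ using 2; rfl
  have haeν : ∀ᵐ x ∂ν, x ∈ K := by rw [ae_iff]; convert hν using 2; rfl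
  -- integrals of all continuous functions agree
  have hbc : ∀ g : (Fin n → ℝ) → ℝ, Continuous g → ∫ x, g x ∂μ = ∫ x, g x ∂ν := by
    intro g hgc
    have hiμ : Integrable g μ := integrable_of_cont μ hμ hgc
    have hiν : Integrable g ν := integrable_of_cont ν hν hgc
    set D := ∫ x, g x ∂μ - ∫ x, g x ∂ν with hD
    set C := (μ Set.univ).toReal + (ν Set.univ).toReal with hC
    have hC0 : 0 ≤ C := by positivity
    have hbound : ∀ ε : ℝ, 0 < ε → |D| ≤ ε * C := by
      intro ε hε
      obtain ⟨p, hp⟩ := ContinuousMap.exists_mem_subalgebra_near_continuous_of_separatesPoints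
        W hsep (fun x : K => g x) (hgc.comp continuous_subtype_val) ε hε
      obtain ⟨gp, hgp, hpg⟩ := p.2
      obtain ⟨hgμ, hgν, hgeq⟩ := span_P μ ν hμ hν h hgp
      have hdiff : ∀ᵐ x ∂(μ + ν), True := by simp
      have hest : ∀ x : Fin n → ℝ, x ∈ K → ‖g x - gp x‖ ≤ ε := by
        intro x hx
        have h1 := hp ⟨x, hx⟩
        rw [hpg ⟨x, hx⟩] at h1
        rw [norm_sub_rev]
        exact h1.le
      have h1 : ‖∫ x, (g x - gp x) ∂μ‖ ≤ ε * (μ Set.univ).toReal := by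
        apply norm_integral_le_of_norm_le_const
        filter_upwards [haeμ] with x hx using hest x hx
      have h2 : ‖∫ x, (g x - gp x) ∂ν‖ ≤ ε * (ν Set.univ).toReal := by
        apply norm_integral_le_of_norm_le_const
        filter_upwards [haeν] with x hx using hest x hx
      have hDeq : D = (∫ x, (g x - gp x) ∂μ) - ∫ x, (g x - gp x) ∂ν := by
        rw [integral_sub hiμ hgμ, integral_sub hiν hgν, hD, hgeq]
        ring
      rw [hDeq, hC]
      calc ‖(∫ x, (g x - gp x) ∂μ) - ∫ x, (g x - gp x) ∂ν‖
          ≤ ‖∫ x, (g x - gp x) ∂μ‖ + ‖∫ x, (g x - gp x) ∂ν‖ := norm_sub_le _ _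
        _ ≤ ε * (μ Set.univ).toReal + ε * (ν Set.univ).toReal := add_le_add h1 h2
        _ = ε * ((μ Set.univ).toReal + (ν Set.univ).toReal) := by ring
    have hD0 : D = 0 := by
      by_contra hne
      have habs : 0 < |D| := abs_pos.mpr hne
      rcases eq_or_lt_of_le hC0 with hCeq | hCpos
      · have := hbound 1 one_pos
        rw [← hCeq] at this
        simp only [mul_zero] at this
        linarith
      · have hb := hbound (|D| / (2 * C)) (by positivity)
        have heq2 : |D| / (2 * C) * C = |D| / 2 := by field_simp
        rw [heq2] at hb
        linarith
    linarith [hD0]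
  -- conclude via bounded continuous ℝ≥0-valued functions
  apply ext_of_forall_lintegral_eq_of_IsFiniteMeasure
  intro f
  have hreal : ∫ x, (f x : ℝ) ∂μ = ∫ x, (f x : ℝ) ∂ν :=
    hbc _ (NNReal.continuous_coe.comp f.continuous)
  have h1 := BoundedContinuousFunction.toReal_lintegral_coe_eq_integral f μ
  have h2 := BoundedContinuousFunction.toReal_lintegral_coe_eq_integral f ν
  have hfin1 : ∫⁻ x, (f x : ℝ≥0∞) ∂μ ≠ ⊤ :=
    (BoundedContinuousFunction.lintegral_lt_top_of_nnreal μ f).ne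
  have hfin2 : ∫⁻ x, (f x : ℝ≥0∞) ∂ν ≠ ⊤ :=
    (BoundedContinuousFunction.lintegral_lt_top_of_nnreal ν f).ne
  exact (ENNReal.toReal_eq_toReal_iff' hfin1 hfin2).mp (by rw [h1, h2, hreal])
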